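/- arXiv:1706.08165 — 2 statements merged into one kernel-verified Lean document; each statement's English description precedes it below -/
import Mathlib

section
/- Define \(S = \{v \in \mathbb{Z}^3 : 2v_1 + 5v_2 + 6v_3 \bmod 20 \in \{0, 2, 5, 7\}\}\). Then every connected component of the subgraph of the unit distance graph of \(\mathbb{Z}^3\) induced by \(S\) is a 4-cycle, i.e., a translate of the unit square \(\{(0,0,0),(1,0,0),(1,1,0),(0,1,0)\}\). -/
def dist1 (u v : ℤ × ℤ × ℤ) : ℤ :=
  |u.1 - v.1| + |u.2.1 - v.2.1| + |u.2.2 - v.2.2|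

def Vsq : Set (ℤ × ℤ × ℤ) := {(0,0,0), (1,0,0), (0,1,0), (1,1,0)}

def Vstar : Set (ℤ × ℤ × ℤ) := {v | ∃ w ∈ Vsq, dist1 v w ≤ 1}

def Λ : SimpleGraph (ℤ × ℤ × ℤ) where
  Adj u v := dist1 u v = 1
  symm := by
    constructor
    intro u v h
    simpa [dist1, abs_sub_comm] using h
  loopless := by
    constructor
    intro u h
    simp [dist1] at h

def IsPDS (S : Set (ℤ × ℤ × ℤ)) : Prop :=
  ∀ v ∉ S, ∃! w, w ∈ S ∧ dist1 v w = 1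

def comp (S : Set (ℤ × ℤ × ℤ)) (v : ℤ × ℤ × ℤ) : Set (ℤ × ℤ × ℤ) :=
  {w | ∃ (hv : v ∈ S) (hw : w ∈ S), (Λ.induce S).Reachable ⟨v, hv⟩ ⟨w, hw⟩}

def AllComponentsFourCycles (S : Set (ℤ × ℤ × ℤ)) : Prop :=
  ∀ v ∈ S, (comp S v).ncard = 4 ∧
    ∀ w ∈ comp S v, {u ∈ comp S v | dist1 w u = 1}.ncard = 2

/- ### Auxiliary definitions and lemmas -/

private def fS (v : ℤ × ℤ × ℤ) : ZMod 20 := 2 * v.1 + 5 * v.2.1 + 6 * v.2.2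

private def Sset : Set (ℤ × ℤ × ℤ) := {v | fS v ∈ ({0, 2, 5, 7} : Set (ZMod 20))}

private lemma fS_add (u v : ℤ × ℤ × ℤ) : fS (u + v) = fS u + fS v := by
  simp only [fS, Prod.fst_add, Prod.snd_add]
  push_cast
  ring

private lemma mem_Sset {v : ℤ × ℤ × ℤ} (h : fS v = 0 ∨ fS v = 2 ∨ fS v = 5 ∨ fS v = 7) :
    v ∈ Sset := by
  simpa only [Sset, Set.mem_setOf_eq, Set.mem_insert_iff, Set.mem_singleton_iff] using h

set_option maxHeartbeats 1000000 in
private lemma dist1_cases {w u : ℤ × ℤ × ℤ} (h : dist1 w u = 1) :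
    u = w + (1,0,0) ∨ u = w + (-1,0,0) ∨ u = w + (0,1,0) ∨
    u = w + (0,-1,0) ∨ u = w + (0,0,1) ∨ u = w + (0,0,-1) := by
  obtain ⟨a,b,c⟩ := w; obtain ⟨d,e,f⟩ := u
  simp only [dist1, Prod.mk_add_mk, Prod.mk.injEq] at h ⊢
  rcases abs_cases (a-d) with ⟨h1,h1'⟩|⟨h1,h1'⟩ <;>
  rcases abs_cases (b-e) with ⟨h2,h2'⟩|⟨h2,h2'⟩ <;>
  rcases abs_cases (c-f) with ⟨h3,h3'⟩|⟨h3,h3'⟩ <;>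
  rw [h1, h2, h3] at h <;> omega

set_option maxHeartbeats 2000000 in
private lemma sqClosure {z w u : ℤ × ℤ × ℤ} (hz : fS z = 0)
    (hw : w = z ∨ w = z + (1,0,0) ∨ w = z + (1,1,0) ∨ w = z + (0,1,0))
    (hu : u ∈ Sset) (hd : dist1 w u = 1) :
    u = z ∨ u = z + (1,0,0) ∨ u = z + (1,1,0) ∨ u = z + (0,1,0) := by
  simp only [Sset, Set.mem_setOf_eq, Set.mem_insert_iff, Set.mem_singleton_iff] at hu
  rcases hw with rfl|rfl|rfl|rfl <;> rcases dist1_cases hd with rfl|rfl|rfl|rfl|rfl|rfl <;>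
    (try simp only [add_assoc, Prod.mk_add_mk] at hu ⊢) <;>
    (try norm_num at hu ⊢) <;>
    first
      | tauto
      | (rw [fS_add, hz, zero_add] at hu; revert hu; decide)

private lemma reach_in_sq {z : ℤ × ℤ × ℤ} (hz : fS z = 0) {a b : ↥Sset}
    (h : (Λ.induce Sset).Reachable a b)
    (ha : a.1 = z ∨ a.1 = z + (1,0,0) ∨ a.1 = z + (1,1,0) ∨ a.1 = z + (0,1,0)) :
    b.1 = z ∨ b.1 = z + (1,0,0) ∨ b.1 = z + (1,1,0) ∨ b.1 = z + (0,1,0) := by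
  obtain ⟨p⟩ := h
  induction p with
  | nil => exact ha
  | @cons x y w h q ih =>
      refine ih ?_
      have hd : dist1 x.1 y.1 = 1 := h
      exact sqClosure hz ha y.2 hd

private lemma adj_of_dist {a b : ℤ × ℤ × ℤ} (ha : a ∈ Sset) (hb : b ∈ Sset)
    (h : dist1 a b = 1) : (Λ.induce Sset).Adj ⟨a, ha⟩ ⟨b, hb⟩ := by
  simpa [SimpleGraph.induce, Λ] using h

private lemma dist1_e1 (z : ℤ × ℤ × ℤ) : dist1 z (z + (1,0,0)) = 1 := by
  obtain ⟨a,b,c⟩ := z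
  simp only [dist1, Prod.mk_add_mk, Int.abs_eq_natAbs]
  omega

private lemma dist1_e2 (z : ℤ × ℤ × ℤ) : dist1 z (z + (0,1,0)) = 1 := by
  obtain ⟨a,b,c⟩ := z
  simp only [dist1, Prod.mk_add_mk, Int.abs_eq_natAbs]
  omega

private lemma dist1_e2' (z : ℤ × ℤ × ℤ) : dist1 (z + (0,1,0)) (z + (1,1,0)) = 1 := by
  obtain ⟨a,b,c⟩ := z
  simp only [dist1, Prod.mk_add_mk, Int.abs_eq_natAbs]
  omega

private lemma fS_sq {z : ℤ × ℤ × ℤ} (hz : fS z = 0) :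
    fS (z + (1,0,0)) = 2 ∧ fS (z + (1,1,0)) = 7 ∧ fS (z + (0,1,0)) = 5 := by
  refine ⟨?_, ?_, ?_⟩ <;> rw [fS_add, hz, zero_add] <;> decide

private lemma comp_eq {z : ℤ × ℤ × ℤ} (hz : fS z = 0) {v : ℤ × ℤ × ℤ}
    (hv : v = z ∨ v = z + (1,0,0) ∨ v = z + (1,1,0) ∨ v = z + (0,1,0)) :
    comp Sset v = {z, z + (1,0,0), z + (1,1,0), z + (0,1,0)} := by
  obtain ⟨f1, f2, f3⟩ := fS_sq hz
  have m0 : z ∈ Sset := mem_Sset (Or.inl hz)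
  have m1 : z + (1,0,0) ∈ Sset := mem_Sset (Or.inr (Or.inl f1))
  have m2 : z + (1,1,0) ∈ Sset := mem_Sset (Or.inr (Or.inr (Or.inr f2)))
  have m3 : z + (0,1,0) ∈ Sset := mem_Sset (Or.inr (Or.inr (Or.inl f3)))
  have r0 : (Λ.induce Sset).Reachable ⟨z, m0⟩ ⟨z, m0⟩ := SimpleGraph.Reachable.refl _
  have r1 : (Λ.induce Sset).Reachable ⟨z, m0⟩ ⟨z + (1,0,0), m1⟩ :=
    (adj_of_dist m0 m1 (dist1_e1 z)).reachable
  have r3 : (Λ.induce Sset).Reachable ⟨z, m0⟩ ⟨z + (0,1,0), m3⟩ :=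
    (adj_of_dist m0 m3 (dist1_e2 z)).reachable
  have r2 : (Λ.induce Sset).Reachable ⟨z, m0⟩ ⟨z + (1,1,0), m2⟩ :=
    r3.trans (adj_of_dist m3 m2 (dist1_e2' z)).reachable
  have hvS : v ∈ Sset := by rcases hv with rfl|rfl|rfl|rfl <;> assumption
  have rv : (Λ.induce Sset).Reachable ⟨z, m0⟩ ⟨v, hvS⟩ := by
    rcases hv with rfl|rfl|rfl|rfl
    · exact r0
    · exact r1
    · exact r2
    · exact r3
  ext w
  simp only [comp, Set.mem_setOf_eq, Set.mem_insert_iff, Set.mem_singleton_iff]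
  constructor
  · rintro ⟨hv', hw', hr⟩
    exact reach_in_sq hz hr hv
  · intro hw
    rcases hw with rfl|rfl|rfl|rfl
    · exact ⟨hvS, m0, rv.symm.trans r0⟩
    · exact ⟨hvS, m1, rv.symm.trans r1⟩
    · exact ⟨hvS, m2, rv.symm.trans r2⟩
    · exact ⟨hvS, m3, rv.symm.trans r3⟩

theorem stmt8 :
    ∀ v ∈ {v : ℤ × ℤ × ℤ |
        (2 * v.1 + 5 * v.2.1 + 6 * v.2.2 : ZMod 20) ∈ ({0, 2, 5, 7} : Set (ZMod 20))},
      ∃ z : ℤ × ℤ × ℤ,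
        comp {v : ℤ × ℤ × ℤ |
            (2 * v.1 + 5 * v.2.1 + 6 * v.2.2 : ZMod 20) ∈ ({0, 2, 5, 7} : Set (ZMod 20))} v =
          {z, z + (1,0,0), z + (1,1,0), z + (0,1,0)} := by
  intro v hv
  have hv' : fS v = 0 ∨ fS v = 2 ∨ fS v = 5 ∨ fS v = 7 := by
    simpa only [Set.mem_setOf_eq, Set.mem_insert_iff, Set.mem_singleton_iff, fS] using hv
  rcases hv' with h|h|h|h
  · exact ⟨v, comp_eq h (Or.inl rfl)⟩
  · refine ⟨v - (1,0,0), ?_⟩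
    have hveq : v = v - (1,0,0) + (1,0,0) := by ring
    have hz : fS (v - (1,0,0)) = 0 := by
      have := fS_add (v - (1,0,0)) (1,0,0)
      rw [← hveq, h] at this
      have h2 : fS ((1,0,0) : ℤ × ℤ × ℤ) = 2 := by decide
      rw [h2] at this
      have h3 : fS (v - (1,0,0)) + 2 = 0 + 2 := by rw [zero_add, ← this]
      exact add_right_cancel h3
    exact comp_eq hz (Or.inr (Or.inl hveq))
  · refine ⟨v - (0,1,0), ?_⟩
    have hveq : v = v - (0,1,0) + (0,1,0) := by ring
    have hz : fS (v - (0,1,0)) = 0 := by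
      have := fS_add (v - (0,1,0)) (0,1,0)
      rw [← hveq, h] at this
      have h2 : fS ((0,1,0) : ℤ × ℤ × ℤ) = 5 := by decide
      rw [h2] at this
      have h3 : fS (v - (0,1,0)) + 5 = 0 + 5 := by rw [zero_add, ← this]
      exact add_right_cancel h3
    exact comp_eq hz (Or.inr (Or.inr (Or.inr hveq)))
  · refine ⟨v - (1,1,0), ?_⟩
    have hveq : v = v - (1,1,0) + (1,1,0) := by ring
    have hz : fS (v - (1,1,0)) = 0 := by
      have := fS_add (v - (1,1,0)) (1,1,0)
      rw [← hveq, h] at this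
      have h2 : fS ((1,1,0) : ℤ × ℤ × ℤ) = 7 := by decide
      rw [h2] at this
      have h3 : fS (v - (1,1,0)) + 7 = 0 + 7 := by rw [zero_add, ← this]
      exact add_right_cancel h3
    exact comp_eq hz (Or.inr (Or.inr (Or.inl hveq)))
end

section
/- Let \(d\) be the \(\ell_1\) distance on \(\mathbb{Z}^3\), \(V = \{(0,0,0),(1,0,0),(0,1,0),(1,1,0)\}\), and \(V^* = \{v : d(v,V) \le 1\}\). If \(\Phi : \mathbb{Z}^3 \to G\) is a group homomorphism onto an abelian group \(G\) of order 20 whose restriction to \(V^*\) is injective, then for every \(v \in \mathbb{Z}^3\) there exists a unique \(z \in \ker\Phi\) with \(v - z \in V^*\). -/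
def VstarFin : Finset (ℤ × ℤ × ℤ) :=
  {(-1,0,0), (-1,1,0), (0,-1,0), (0,0,-1), (0,0,0), (0,0,1), (0,1,-1), (0,1,0),
   (0,1,1), (0,2,0), (1,-1,0), (1,0,-1), (1,0,0), (1,0,1), (1,1,-1), (1,1,0),
   (1,1,1), (1,2,0), (2,0,0), (2,1,0)}

lemma Vstar_eq : Vstar = ↑VstarFin := by
  ext ⟨a, b, c⟩
  constructor
  · rintro ⟨⟨x, y, z⟩, hw, hd⟩
    simp only [Vsq, Prod.mk.injEq, Set.mem_insert_iff, Set.mem_singleton_iff] at hw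
    simp only [dist1, Int.abs_eq_natAbs] at hd
    rcases hw with ⟨h1,h2,h3⟩|⟨h1,h2,h3⟩|⟨h1,h2,h3⟩|⟨h1,h2,h3⟩ <;> subst h1 <;> subst h2 <;> subst h3 <;>
    · obtain ⟨ha1, ha2⟩ : -1 ≤ a ∧ a ≤ 2 := by omega
      obtain ⟨hb1, hb2⟩ : -1 ≤ b ∧ b ≤ 2 := by omega
      obtain ⟨hc1, hc2⟩ : -1 ≤ c ∧ c ≤ 1 := by omega
      interval_cases a <;> interval_cases b <;> interval_cases c <;> revert hd <;> decide
  · intro h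
    have hfin : ∀ p ∈ VstarFin,
        ∃ w ∈ ({((0:ℤ),(0:ℤ),(0:ℤ)), (1,0,0), (0,1,0), (1,1,0)} : Finset (ℤ×ℤ×ℤ)),
          dist1 p w ≤ 1 := by decide
    obtain ⟨w, hw, hd⟩ := hfin _ h
    refine ⟨w, ?_, hd⟩
    simp only [Finset.mem_insert, Finset.mem_singleton] at hw
    simp only [Vsq, Set.mem_insert_iff, Set.mem_singleton_iff]
    tauto

lemma Vstar_ncard : Vstar.ncard = 20 := by
  rw [Vstar_eq, Set.ncard_coe_finset]
  decide

theorem stmt15 (G : Type) [AddCommGroup G] (hG : Nat.card G = 20)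
    (Φ : (ℤ × ℤ × ℤ) →+ G) (hsurj : Function.Surjective Φ)
    (hinj : Set.InjOn Φ Vstar) :
    ∀ v : ℤ × ℤ × ℤ, ∃! z : ℤ × ℤ × ℤ, z ∈ Φ.ker ∧ v - z ∈ Vstar := by
  have hfinG : Finite G := Nat.finite_of_card_ne_zero (by omega)
  have himg : Φ '' Vstar = Set.univ := by
    apply Set.eq_of_subset_of_ncard_le (Set.subset_univ _)
    rw [Set.ncard_univ, hG, Set.ncard_image_of_injOn hinj, Vstar_ncard]
  intro v
  have : Φ v ∈ Φ '' Vstar := himg ▸ Set.mem_univ _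
  obtain ⟨w, hw, hΦw⟩ := this
  refine ⟨v - w, ⟨?_, by simpa using hw⟩, ?_⟩
  · simp [AddMonoidHom.mem_ker, hΦw]
  · rintro z ⟨hz, hvz⟩
    have h1 : Φ (v - z) = Φ w := by
      rw [AddMonoidHom.mem_ker] at hz
      simp [map_sub, hz, hΦw]
    have h2 := hinj hvz hw h1
    linear_combination -h2
end
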